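/- Every element x of the graph group G_F is the join (with respect to the lattice order ≤) of all peaks p with p ≤ x. -/

import Mathlib

open Pointwise

namespace GraphGroupPaper

/-- The set of commutator relators: `gᵢ` and `gⱼ` commute for every pair of distinct
`i, j` with `{i,j} ∉ F`. -/
def Rels (k : ℕ) (F : Set (Sym2 (Fin k))) : Set (FreeGroup (Fin k)) :=
  {w | ∃ i j : Fin k, i ≠ j ∧ s(i, j) ∉ F ∧
      w = FreeGroup.of i * FreeGroup.of j * (FreeGroup.of i)⁻¹ * (FreeGroup.of j)⁻¹}

/-- The graph group `G_F` with generators `g₁, …, g_k` and relations `gᵢgⱼ = gⱼgᵢ`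
for all distinct `i, j` with `{i,j} ∉ F`. -/
abbrev Grp (k : ℕ) (F : Set (Sym2 (Fin k))) := PresentedGroup (Rels k F)

/-- The generator `gᵢ` of the graph group. -/
def gen (k : ℕ) (F : Set (Sym2 (Fin k))) (i : Fin k) : Grp k F :=
  PresentedGroup.of i

/-- The group element corresponding to a symbol: `(i, true)` stands for `gᵢ`,
`(i, false)` stands for `gᵢ⁻¹`. -/
def sym (k : ℕ) (F : Set (Sym2 (Fin k))) (α : Fin k × Bool) : Grp k F :=
  if α.2 then gen k F α.1 else (gen k F α.1)⁻¹

/-- The product of the word `l` of symbols, as an element of the graph group. -/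
def wordProd (k : ℕ) (F : Set (Sym2 (Fin k))) (l : List (Fin k × Bool)) : Grp k F :=
  (l.map (sym k F)).prod

/-- `|x|` : the length of a shortest word in the symbols representing `x`. -/
noncomputable def len {k : ℕ} {F : Set (Sym2 (Fin k))} (x : Grp k F) : ℕ :=
  sInf {n | ∃ l : List (Fin k × Bool), wordProd k F l = x ∧ l.length = n}

/-- The partial order on `G_F`:  `x ≤ y` iff `|y| = |x| + |x⁻¹y|`. -/
def le {k : ℕ} {F : Set (Sym2 (Fin k))} (x y : Grp k F) : Prop :=
  len y = len x + len (x⁻¹ * y)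

/-- `m` is the meet `x ∧ y` (greatest lower bound w.r.t. `le`). -/
def IsMeet {k : ℕ} {F : Set (Sym2 (Fin k))} (x y m : Grp k F) : Prop :=
  le m x ∧ le m y ∧ ∀ w, le w x → le w y → le w m

/-- `j` is the (finite) join `x ∨ y` (least upper bound w.r.t. `le`);
`x ∨ y` is finite iff such a `j` exists. -/
def IsJoin {k : ℕ} {F : Set (Sym2 (Fin k))} (x y j : Grp k F) : Prop :=
  le x j ∧ le y j ∧ ∀ w, le x w → le y w → le j w

/-- `j` is the (finite) join of the set `S`. -/
def IsJoinSet {k : ℕ} {F : Set (Sym2 (Fin k))} (S : Set (Grp k F)) (j : Grp k F) : Prop :=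
  (∀ s ∈ S, le s j) ∧ ∀ w, (∀ s ∈ S, le s w) → le j w

/-- `y` is a segment of `a` if `a = x·y·z` for some `x, z`. -/
def Segment {k : ℕ} {F : Set (Sym2 (Fin k))} (y a : Grp k F) : Prop :=
  ∃ x z, a = x * y * z ∧ len a = len x + len y + len z

/-- The left-invariant metric `dist(x,y) = |x⁻¹y|`. -/
noncomputable def dist {k : ℕ} {F : Set (Sym2 (Fin k))} (x y : Grp k F) : ℕ :=
  len (x⁻¹ * y)

/-- A nonempty set `L` is convex if `x, z ∈ L` and `dist(x,y) + dist(y,z) = dist(x,z)`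
imply `y ∈ L`. -/
def ConvexSet {k : ℕ} {F : Set (Sym2 (Fin k))} (L : Set (Grp k F)) : Prop :=
  L.Nonempty ∧ ∀ x z y : Grp k F, x ∈ L → z ∈ L →
    dist x y + dist y z = dist x z → y ∈ L

/-- An ideal: nonempty, downward closed, and closed under finite joins. -/
def IdealSet {k : ℕ} {F : Set (Sym2 (Fin k))} (I : Set (Grp k F)) : Prop :=
  I.Nonempty ∧ (∀ x ∈ I, ∀ y, le y x → y ∈ I) ∧
    (∀ x ∈ I, ∀ y ∈ I, ∀ j, IsJoin x y j → j ∈ I)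

/-- `H` is closed if both `H` and `H⁻¹` are ideals. -/
def ClosedSet {k : ℕ} {F : Set (Sym2 (Fin k))} (H : Set (Grp k F)) : Prop :=
  IdealSet H ∧ IdealSet H⁻¹

/-- `m` is a minimal element of `S` w.r.t. `le`. -/
def MinimalIn {k : ℕ} {F : Set (Sym2 (Fin k))} (S : Set (Grp k F)) (m : Grp k F) : Prop :=
  m ∈ S ∧ ∀ x ∈ S, le x m → x = m

/-- `l` is a reduced (i.e. shortest) word representing `x`. -/
def MinWord {k : ℕ} {F : Set (Sym2 (Fin k))} (x : Grp k F) (l : List (Fin k × Bool)) : Prop :=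
  wordProd k F l = x ∧ l.length = len x

open Classical in
/-- `#_α(x)`: the number of occurrences of the symbol `α` (not counting `α⁻¹`)
in a reduced word representing `x`. -/
noncomputable def symCount {k : ℕ} {F : Set (Sym2 (Fin k))} (α : Fin k × Bool)
    (x : Grp k F) : ℕ :=
  if h : ∃ l, MinWord x l then h.choose.count α else 0

/-- The symbol `α` occurs in `x`. -/
def Occurs {k : ℕ} {F : Set (Sym2 (Fin k))} (α : Fin k × Bool) (x : Grp k F) : Prop :=
  0 < symCount α x

/-- `α` is a maximal symbol of `x`, i.e. `xα⁻¹ ≤ x`. -/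
def MaxSym {k : ℕ} {F : Set (Sym2 (Fin k))} (α : Fin k × Bool) (x : Grp k F) : Prop :=
  le (x * (sym k F α)⁻¹) x

/-- A peak: an element with precisely one maximal symbol. -/
def IsPeak {k : ℕ} {F : Set (Sym2 (Fin k))} (p : Grp k F) : Prop :=
  ∃! α : Fin k × Bool, MaxSym α p

/-- An `α`-peak: a peak whose unique maximal symbol is `α`. -/
def AlphaPeak {k : ℕ} {F : Set (Sym2 (Fin k))} (α : Fin k × Bool) (p : Grp k F) : Prop :=
  MaxSym α p ∧ ∀ β, MaxSym β p → β = α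

/-- The set of generator indices occurring in `b`. -/
def Support {k : ℕ} {F : Set (Sym2 (Fin k))} (b : Grp k F) : Set (Fin k) :=
  {i | Occurs (i, true) b ∨ Occurs (i, false) b}

/-- `b` is connected: the generators occurring in `b` induce a connected subgraph of
the graph `([k], F)`. -/
def Conn {k : ℕ} {F : Set (Sym2 (Fin k))} (b : Grp k F) : Prop :=
  (SimpleGraph.induce (Support b) (SimpleGraph.fromEdgeSet F)).Connected

/-- `b` is cyclically reduced: `b ∧ b⁻¹ = 1`. -/
def CycRed {k : ℕ} {F : Set (Sym2 (Fin k))} (b : Grp k F) : Prop :=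
  IsMeet b b⁻¹ 1

/-! ### Auxiliary: trace rewriting on words of symbols -/

section Aux

variable {k : ℕ} {F : Set (Sym2 (Fin k))}

/-- Inverse of a symbol. -/
def invS (a : Fin k × Bool) : Fin k × Bool := (a.1, !a.2)

@[simp] lemma invS_invS (a : Fin k × Bool) : invS (invS a) = a := by
  cases a with | mk i b => cases b <;> rfl

@[simp] lemma invS_fst (a : Fin k × Bool) : (invS a).1 = a.1 := rfl

/-- Two symbols commute (distinct generators, not joined in `F`). -/
def CommS (F : Set (Sym2 (Fin k))) (a b : Fin k × Bool) : Prop :=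
  a.1 ≠ b.1 ∧ s(a.1, b.1) ∉ F

lemma CommS.symm {a b : Fin k × Bool} (h : CommS F a b) : CommS F b a :=
  ⟨h.1.symm, by rw [Sym2.eq_swap]; exact h.2⟩

lemma CommS.invS_left {a b : Fin k × Bool} (h : CommS F a b) : CommS F (invS a) b := h

lemma CommS.invS_right {a b : Fin k × Bool} (h : CommS F a b) : CommS F a (invS b) := h

lemma not_commS_self (a : Fin k × Bool) : ¬ CommS F a a := fun h => h.1 rfl

lemma not_commS_invS (a : Fin k × Bool) : ¬ CommS F a (invS a) := fun h => h.1 rfl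

/-- One swap of adjacent commuting symbols. -/
inductive SwapStep (F : Set (Sym2 (Fin k))) :
    List (Fin k × Bool) → List (Fin k × Bool) → Prop
  | swap (p q : List (Fin k × Bool)) (a b : Fin k × Bool) (h : CommS F a b) :
      SwapStep F (p ++ a :: b :: q) (p ++ b :: a :: q)

lemma SwapStep.symm' {l l' : List (Fin k × Bool)} (h : SwapStep F l l') : SwapStep F l' l := by
  cases h with | swap p q a b hab => exact .swap p q b a hab.symm

/-- Equivalence generated by swaps. -/
def Eqv (F : Set (Sym2 (Fin k))) : List (Fin k × Bool) → List (Fin k × Bool) → Prop :=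
  Relation.ReflTransGen (SwapStep F)

lemma Eqv.refl (l : List (Fin k × Bool)) : Eqv F l l := Relation.ReflTransGen.refl

lemma Eqv.trans {l₁ l₂ l₃ : List (Fin k × Bool)} (h : Eqv F l₁ l₂) (h' : Eqv F l₂ l₃) :
    Eqv F l₁ l₃ := Relation.ReflTransGen.trans h h'

lemma Eqv.symm {l₁ l₂ : List (Fin k × Bool)} (h : Eqv F l₁ l₂) : Eqv F l₂ l₁ :=
  by
  induction h with
  | refl => exact Relation.ReflTransGen.refl
  | tail _ hs ih => exact Relation.ReflTransGen.head hs.symm' ih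

lemma Eqv.single {l₁ l₂ : List (Fin k × Bool)} (h : SwapStep F l₁ l₂) : Eqv F l₁ l₂ :=
  Relation.ReflTransGen.single h

lemma SwapStep.length_eq {l l' : List (Fin k × Bool)} (h : SwapStep F l l') :
    l.length = l'.length := by cases h <;> simp

lemma Eqv.length_eq {l l' : List (Fin k × Bool)} (h : Eqv F l l') : l.length = l'.length := by
  induction h with
  | refl => rfl
  | tail _ h ih => exact ih.trans h.length_eq

lemma SwapStep.cons {l l' : List (Fin k × Bool)} (a : Fin k × Bool) (h : SwapStep F l l') :
    SwapStep F (a :: l) (a :: l') := by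
  cases h with | swap p q c d hcd => exact .swap (a :: p) q c d hcd

lemma Eqv.cons {l l' : List (Fin k × Bool)} (a : Fin k × Bool) (h : Eqv F l l') :
    Eqv F (a :: l) (a :: l') := by
  induction h with
  | refl => exact .refl _
  | tail _ h ih => exact ih.trans (Eqv.single (h.cons a))

lemma Eqv.append_left (p : List (Fin k × Bool)) {l l' : List (Fin k × Bool)} (h : Eqv F l l') :
    Eqv F (p ++ l) (p ++ l') := by
  induction p with
  | nil => exact h
  | cons a p ih => exact ih.cons a

lemma SwapStep.append_right {l l' : List (Fin k × Bool)} (h : SwapStep F l l')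
    (q₀ : List (Fin k × Bool)) : SwapStep F (l ++ q₀) (l' ++ q₀) := by
  cases h with | swap p q c d hcd =>
    simpa [List.append_assoc] using SwapStep.swap (F := F) p (q ++ q₀) c d hcd

lemma Eqv.append_right {l l' : List (Fin k × Bool)} (h : Eqv F l l')
    (q₀ : List (Fin k × Bool)) : Eqv F (l ++ q₀) (l' ++ q₀) := by
  induction h with
  | refl => exact .refl _
  | tail _ h ih => exact ih.trans (Eqv.single (h.append_right q₀))

/-- Move a letter commuting with a prefix to the front. -/
lemma Eqv.move_front {p : List (Fin k × Bool)} {a : Fin k × Bool}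
    (hp : ∀ b ∈ p, CommS F a b) (q : List (Fin k × Bool)) :
    Eqv F (p ++ a :: q) (a :: (p ++ q)) := by
  induction p with
  | nil => exact .refl _
  | cons c p ih =>
    have h1 : Eqv F (c :: (p ++ a :: q)) (c :: (a :: (p ++ q))) :=
      (ih (fun b hb => hp b (List.mem_cons_of_mem _ hb))).cons c
    refine h1.trans ?_
    have : SwapStep F ([] ++ c :: a :: (p ++ q)) ([] ++ a :: c :: (p ++ q)) :=
      .swap [] (p ++ q) c a (hp c (List.mem_cons_self)).symm
    simpa using Eqv.single this

lemma Eqv.reverse {l l' : List (Fin k × Bool)} (h : Eqv F l l') :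
    Eqv F l.reverse l'.reverse := by
  induction h with
  | refl => exact .refl _
  | tail _ h ih =>
    refine ih.trans ?_
    cases h with | swap p q a b hab =>
      refine Eqv.single ?_
      have : SwapStep F (q.reverse ++ b :: a :: p.reverse) (q.reverse ++ a :: b :: p.reverse) :=
        .swap q.reverse p.reverse b a hab.symm
      simpa using this

end Aux
section Aux2

variable {k : ℕ} {F : Set (Sym2 (Fin k))}

/-- Extraction: if `a :: m ~ l` then `a` can be pulled out of `l` past a commuting prefix. -/
lemma Eqv.extract {a : Fin k × Bool} {m l : List (Fin k × Bool)}
    (h : Eqv F (a :: m) l) :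
    ∃ p q, l = p ++ a :: q ∧ (∀ b ∈ p, CommS F a b) ∧ Eqv F m (p ++ q) := by
  induction h with
  | refl => exact ⟨[], m, rfl, by simp, .refl _⟩
  | tail _ hstep ih =>
    obtain ⟨p, q, heq, hp, hm⟩ := ih
    cases hstep with | swap P Q c d hcd =>
    rw [List.append_eq_append_iff] at heq
    rcases heq with ⟨r, hpr, hr⟩ | ⟨r, hPr, hr⟩
    · -- p = P ++ r, c :: d :: Q = r ++ a :: q
      rcases r with _ | ⟨c', r'⟩
      · -- r = [] : c = a, q = d :: Q
        simp only [List.nil_append] at hr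
        simp only [List.append_nil] at hpr
        injection hr with h1 h2
        refine ⟨P ++ [d], Q, by simp [h1], ?_, ?_⟩
        · intro b hb
          rcases List.mem_append.1 hb with hb | hb
          · exact hp b (by rw [hpr]; exact hb)
          · simp only [List.mem_singleton] at hb
            subst hb; rw [← h1]; exact hcd
        · rw [hpr, ← h2] at hm; simpa using hm
      · -- r = c' :: r'  (c = c')
        simp only [List.cons_append] at hr
        injection hr with h1 hr2
        rcases r' with _ | ⟨d', r''⟩
        · -- d = a, Q = q
          simp only [List.nil_append] at hr2
          injection hr2 with h2 h3
          refine ⟨P, c :: Q, by simp [h2, h3], ?_, ?_⟩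
          · intro b hb
            exact hp b (by rw [hpr]; exact List.mem_append_left _ hb)
          · rw [hpr, ← h1, ← h3] at hm; simpa using hm
        · -- d = d', Q = r'' ++ a :: q : swap inside the prefix
          simp only [List.cons_append] at hr2
          injection hr2 with h2 h3
          refine ⟨P ++ d :: c :: r'', q, by simp [h3], ?_, ?_⟩
          · intro b hb
            refine hp b ?_
            rw [hpr, ← h1, ← h2]
            simp only [List.mem_append, List.mem_cons] at hb ⊢
            tauto
          · rw [hpr, ← h1, ← h2] at hm
            refine hm.trans ?_
            have : SwapStep F (P ++ c :: d :: (r'' ++ q)) (P ++ d :: c :: (r'' ++ q)) :=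
              .swap P (r'' ++ q) c d hcd
            simpa using Eqv.single this
    · -- P = p ++ r, a :: q = r ++ c :: d :: Q
      rcases r with _ | ⟨a', r''⟩
      · -- r = [] : a = c, q = d :: Q, P = p
        simp only [List.nil_append] at hr
        simp only [List.append_nil] at hPr
        injection hr with h1 h2
        refine ⟨p ++ [d], Q, by rw [hPr, ← h1]; simp, ?_, ?_⟩
        · intro b hb
          rcases List.mem_append.1 hb with hb | hb
          · exact hp b hb
          · simp only [List.mem_singleton] at hb
            subst hb; rw [h1]; exact hcd
        · rw [h2] at hm; simpa using hm
      · -- r = a' :: r'' with a' = a : swap inside the suffix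
        simp only [List.cons_append] at hr
        injection hr with h1 h2
        refine ⟨p, r'' ++ d :: c :: Q, by rw [hPr, ← h1]; simp, hp, ?_⟩
        rw [h2] at hm
        refine hm.trans ?_
        have : SwapStep F ((p ++ r'') ++ c :: d :: Q) ((p ++ r'') ++ d :: c :: Q) :=
          .swap (p ++ r'') Q c d hcd
        simpa using Eqv.single this

end Aux2
section Aux3

variable {k : ℕ} {F : Set (Sym2 (Fin k))}

/-- Left cancellation for trace equivalence. -/
lemma Eqv.cancel_left {a : Fin k × Bool} {m m' : List (Fin k × Bool)}
    (h : Eqv F (a :: m) (a :: m')) : Eqv F m m' := by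
  obtain ⟨p, q, heq, hp, hm⟩ := h.extract
  rcases p with _ | ⟨c, p'⟩
  · simp only [List.nil_append] at heq
    injection heq with _ h2
    rw [← h2] at hm; exact hm
  · exfalso
    simp only [List.cons_append] at heq
    injection heq with h1 _
    have hcc := hp c (List.mem_cons_self)
    rw [← h1] at hcc
    exact not_commS_self a hcc

/-- A word is reduced if no equivalent word contains an adjacent cancelling pair. -/
def RedW (F : Set (Sym2 (Fin k))) (l : List (Fin k × Bool)) : Prop :=
  ∀ l', Eqv F l l' → ∀ p (b : Fin k × Bool) q, l' ≠ p ++ b :: invS b :: q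

lemma RedW.of_eqv {l l' : List (Fin k × Bool)} (h : Eqv F l l') (hl : RedW F l) :
    RedW F l' := fun l'' h' => hl l'' (h.trans h')

lemma RedW.nil : RedW F ([] : List (Fin k × Bool)) := by
  intro l' h p b q hne
  have := h.length_eq
  subst hne
  simp at this

lemma RedW.tail {a : Fin k × Bool} {m : List (Fin k × Bool)} (h : RedW F (a :: m)) :
    RedW F m := by
  intro l' hl' p b q hne
  exact h (a :: l') (hl'.cons a) (a :: p) b q (by rw [hne]; rfl)

/-- Key closure: prepending a letter that cannot be cancelled keeps reducedness. -/
lemma RedW.cons {a : Fin k × Bool} {l : List (Fin k × Bool)} (hl : RedW F l)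
    (hno : ¬ ∃ m, Eqv F (invS a :: m) l) : RedW F (a :: l) := by
  intro l' hl' p b q hne
  subst hne
  obtain ⟨p₁, q₁, heq, hp₁, hm⟩ := hl'.extract
  -- p₁ ++ a :: q₁ = p ++ b :: invS b :: q,  l ~ p₁ ++ q₁
  rw [List.append_eq_append_iff] at heq
  rcases heq with ⟨r, h₁, h₂⟩ | ⟨r, h₁, h₂⟩
  · -- h₁ : p₁ = p ++ r,  h₂ : b :: invS b :: q = r ++ a :: q₁
    rcases r with _ | ⟨b', r''⟩
    · -- b = a, q₁ = invS b :: q, p₁ = p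
      simp only [List.nil_append] at h₂
      simp only [List.append_nil] at h₁
      injection h₂ with hba h₂
      refine hno ⟨p₁ ++ q, ?_⟩
      have hmv : Eqv F (p₁ ++ invS a :: q) (invS a :: (p₁ ++ q)) :=
        Eqv.move_front (fun c hc => (hp₁ c hc).invS_left) q
      refine Eqv.trans hmv.symm ?_
      rw [← h₂, hba] at hm
      exact hm.symm
    · injection h₂ with hbb h₂
      rcases r'' with _ | ⟨c', r₃⟩
      · -- a = invS b, but b ∈ p₁ commutes with a : contradiction
        try simp only [List.nil_append] at h₂
        injection h₂ with h2 _
        exfalso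
        have hb : b ∈ p₁ := by rw [h₁, ← hbb]; simp
        have := hp₁ b hb
        rw [← h2] at this
        exact not_commS_invS b this.symm
      · -- pair is inside p₁ : l not reduced
        injection h₂ with h2 h3
        refine hl (p₁ ++ q₁) hm p b (r₃ ++ q₁) ?_
        rw [h₁, ← hbb, ← h2]
        try simp
  · -- h₁ : p = p₁ ++ r,  h₂ : a :: q₁ = r ++ b :: invS b :: q
    rcases r with _ | ⟨a', r''⟩
    · -- a = b, q₁ = invS b :: q
      simp only [List.nil_append] at h₂
      simp only [List.append_nil] at h₁
      injection h₂ with hab h₂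
      refine hno ⟨p₁ ++ q, ?_⟩
      have hmv : Eqv F (p₁ ++ invS a :: q) (invS a :: (p₁ ++ q)) :=
        Eqv.move_front (fun c hc => (hp₁ c hc).invS_left) q
      refine Eqv.trans hmv.symm ?_
      rw [← hab] at h₂
      rw [h₂] at hm
      exact hm.symm
    · -- pair is inside q₁ : l not reduced
      injection h₂ with _ h₂
      refine hl (p₁ ++ q₁) hm (p₁ ++ r'') b q ?_
      rw [h₂]
      simp

end Aux3
section Aux4

variable {k : ℕ} {F : Set (Sym2 (Fin k))}

/-- The setoid of trace equivalence. -/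
def WS (F : Set (Sym2 (Fin k))) : Setoid (List (Fin k × Bool)) :=
  ⟨Eqv F, ⟨Eqv.refl, Eqv.symm, Eqv.trans⟩⟩

/-- Reduced classes. -/
def RedQ (F : Set (Sym2 (Fin k))) (c : Quotient (WS F)) : Prop :=
  ∃ l, RedW F l ∧ Quotient.mk (WS F) l = c

lemma eqv_of_eq {l l' : List (Fin k × Bool)}
    (h : Quotient.mk (WS F) l = Quotient.mk (WS F) l') : Eqv F l l' := Quotient.exact h

lemma redQ_elim {c : Quotient (WS F)} (hc : RedQ F c) {l : List (Fin k × Bool)}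
    (hl : Quotient.mk (WS F) l = c) : RedW F l := by
  obtain ⟨l₀, h₀, hc0⟩ := hc
  exact RedW.of_eqv (eqv_of_eq (hc0.trans hl.symm)) h₀

/-- The carrier of the action: reduced classes. -/
def XR (F : Set (Sym2 (Fin k))) := {c : Quotient (WS F) // RedQ F c}

lemma out_spec (c : Quotient (WS F)) : Quotient.mk (WS F) c.out = c := Quotient.out_eq c

open Classical in
/-- The action of a symbol on reduced classes. -/
noncomputable def mu (a : Fin k × Bool) (x : XR F) : XR F :=
  if h : ∃ m, Eqv F (invS a :: m) x.1.out then
    ⟨Quotient.mk (WS F) h.choose, h.choose,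
      (RedW.of_eqv h.choose_spec.symm (redQ_elim x.2 (out_spec x.1))).tail, rfl⟩
  else
    ⟨Quotient.mk (WS F) (a :: x.1.out),
      a :: x.1.out, (redQ_elim x.2 (out_spec x.1)).cons h, rfl⟩

lemma mu_fst₁ {a : Fin k × Bool} {l m : List (Fin k × Bool)}
    (h : Eqv F (invS a :: m) l) (x : XR F) (hx : x.1 = Quotient.mk (WS F) l) :
    (mu a x).1 = Quotient.mk (WS F) m := by
  have hout : Eqv F l x.1.out := eqv_of_eq (by rw [out_spec, hx])
  have hex : ∃ m', Eqv F (invS a :: m') x.1.out := ⟨m, h.trans hout⟩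
  rw [mu]; erw [dif_pos hex]
  refine Quotient.sound ?_
  have h1 : Eqv F (invS a :: hex.choose) (invS a :: m) :=
    hex.choose_spec.trans ((h.trans hout).symm)
  exact h1.cancel_left

lemma mu_fst₂ {a : Fin k × Bool} {l : List (Fin k × Bool)}
    (h : ¬ ∃ m, Eqv F (invS a :: m) l) (x : XR F) (hx : x.1 = Quotient.mk (WS F) l) :
    (mu a x).1 = Quotient.mk (WS F) (a :: l) := by
  have hout : Eqv F l x.1.out := eqv_of_eq (by rw [out_spec, hx])
  have hex : ¬ ∃ m', Eqv F (invS a :: m') x.1.out := by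
    rintro ⟨m', hm'⟩; exact h ⟨m', hm'.trans hout.symm⟩
  rw [mu]; erw [dif_neg hex]
  exact Quotient.sound (hout.symm.cons a)

lemma redW_of_mem {x : XR F} {l : List (Fin k × Bool)}
    (hx : x.1 = Quotient.mk (WS F) l) : RedW F l := redQ_elim x.2 hx.symm

/-- `mu (invS a)` undoes `mu a`. -/
lemma mu_mu_inv (a : Fin k × Bool) (x : XR F) : mu (invS a) (mu a x) = x := by
  apply Subtype.ext
  have hl : RedW F x.1.out := redQ_elim x.2 (out_spec x.1)
  by_cases h : ∃ m, Eqv F (invS a :: m) x.1.out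
  · have h1 : (mu a x).1 = Quotient.mk (WS F) h.choose :=
      mu_fst₁ h.choose_spec x (out_spec x.1).symm
    have hno : ¬ ∃ m₂, Eqv F (invS (invS a) :: m₂) h.choose := by
      rintro ⟨m₂, hm₂⟩
      rw [invS_invS] at hm₂
      refine hl (invS a :: a :: m₂) (h.choose_spec.symm.trans (hm₂.symm.cons _)) [] (invS a)
        m₂ ?_
      rw [invS_invS]; rfl
    rw [mu_fst₂ hno (mu a x) h1]
    exact (Quotient.sound h.choose_spec).trans (out_spec x.1)
  · have h1 : (mu a x).1 = Quotient.mk (WS F) (a :: x.1.out) :=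
      mu_fst₂ h x (out_spec x.1).symm
    have hext : Eqv F (invS (invS a) :: x.1.out) (a :: x.1.out) := by
      rw [invS_invS]; exact .refl _
    rw [mu_fst₁ hext (mu a x) h1]
    exact out_spec x.1

end Aux4
section Aux5

variable {k : ℕ} {F : Set (Sym2 (Fin k))}

/-- Extracting `d` from `c :: l` with `d ≠ c` extracts it from `l`. -/
lemma ext_of_ext_cons {c d : Fin k × Bool} {m l : List (Fin k × Bool)}
    (h : Eqv F (d :: m) (c :: l)) (hdc : d ≠ c) : ∃ m', Eqv F (d :: m') l := by
  obtain ⟨p, q, heq, hp, hm⟩ := h.extract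
  rcases p with _ | ⟨c', p'⟩
  · exfalso; injection heq with h1 _; exact hdc h1.symm
  · injection heq with h1 h2
    refine ⟨p' ++ q, ?_⟩
    rw [h2]
    refine Eqv.symm ?_
    exact Eqv.move_front (fun b hb => hp b (by simp [hb])) q

/-- Two distinct extractable letters are simultaneously extractable (and commute). -/
lemma double_extract {c d : Fin k × Bool} {m₁ m₂ l : List (Fin k × Bool)}
    (h₁ : Eqv F (c :: m₁) l) (h₂ : Eqv F (d :: m₂) l) (hcd : c ≠ d) :
    CommS F c d ∧ ∃ w, Eqv F (c :: d :: w) l := by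
  have h3 : Eqv F (c :: m₁) (d :: m₂) := h₁.trans h₂.symm
  obtain ⟨p, q, heq, hp, hm⟩ := h3.extract
  rcases p with _ | ⟨d', p'⟩
  · exfalso; injection heq with h1 _; exact hcd h1.symm
  · injection heq with h1 h2
    have hcomm : CommS F c d := by
      have := hp d' (List.mem_cons_self); rwa [← h1] at this
    refine ⟨hcomm, p' ++ q, ?_⟩
    have hmv : Eqv F (p' ++ c :: q) (c :: (p' ++ q)) :=
      Eqv.move_front (fun b hb => hp b (by simp [hb])) q
    have step1 : Eqv F (c :: d :: (p' ++ q)) (d :: c :: (p' ++ q)) :=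
      Eqv.single (.swap [] (p' ++ q) c d hcomm)
    have step2 : Eqv F (d :: c :: (p' ++ q)) (d :: m₂) := by
      rw [h2]; exact (hmv.cons d).symm
    exact (step1.trans step2).trans h₂

/-- The action of commuting symbols commutes. -/
lemma mu_comm {a b : Fin k × Bool} (hab : CommS F a b) (x : XR F) :
    mu a (mu b x) = mu b (mu a x) := by
  have key : ∀ a b : Fin k × Bool, CommS F a b →
      ∀ x : XR F, (¬ ∃ m, Eqv F (invS a :: m) x.1.out) →
      (∃ m, Eqv F (invS b :: m) x.1.out) → mu a (mu b x) = mu b (mu a x) := by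
    intro a b hab x ha hb
    apply Subtype.ext
    have hl : RedW F x.1.out := redQ_elim x.2 (out_spec x.1)
    obtain ⟨m, hm⟩ := hb
    have h1 : (mu b x).1 = Quotient.mk (WS F) m := mu_fst₁ hm x (out_spec x.1).symm
    -- m has no `invS a` extraction
    have hnoam : ¬ ∃ m', Eqv F (invS a :: m') m := by
      rintro ⟨m', hm'⟩
      refine ha ⟨invS b :: m', ?_⟩
      have : Eqv F (invS b :: invS a :: m') (invS b :: m) := hm'.cons _
      have hsw : Eqv F (invS a :: invS b :: m') (invS b :: invS a :: m') :=
        Eqv.single (.swap [] m' (invS a) (invS b) hab)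
      exact (hsw.trans this).trans hm
    have lhs : (mu a (mu b x)).1 = Quotient.mk (WS F) (a :: m) :=
      mu_fst₂ hnoam (mu b x) h1
    have h2 : (mu a x).1 = Quotient.mk (WS F) (a :: x.1.out) :=
      mu_fst₂ ha x (out_spec x.1).symm
    have hext : Eqv F (invS b :: a :: m) (a :: x.1.out) := by
      have h3 : Eqv F (a :: invS b :: m) (a :: x.1.out) := hm.cons a
      have hsw : Eqv F (invS b :: a :: m) (a :: invS b :: m) :=
        Eqv.single (SwapStep.symm' (SwapStep.swap [] m a (invS b) hab.invS_right))
      exact hsw.trans h3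
    have rhs : (mu b (mu a x)).1 = Quotient.mk (WS F) (a :: m) :=
      mu_fst₁ hext (mu a x) h2
    rw [lhs, rhs]
  by_cases ha : ∃ m, Eqv F (invS a :: m) x.1.out <;>
    by_cases hb : ∃ m, Eqv F (invS b :: m) x.1.out
  · -- both extractable
    apply Subtype.ext
    obtain ⟨m₁, hm₁⟩ := ha
    obtain ⟨m₂, hm₂⟩ := hb
    have hne : invS a ≠ invS b := by
      intro h; exact hab.1 (congrArg Prod.fst (by simpa using congrArg invS h))
    obtain ⟨hcomm, w, hw⟩ := double_extract hm₁ hm₂ hne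
    have hw' : Eqv F (invS b :: invS a :: w) x.1.out :=
      Eqv.trans (Eqv.single (.swap [] w (invS a) (invS b) hcomm)).symm hw
    have hl : RedW F x.1.out := redQ_elim x.2 (out_spec x.1)
    -- mu b x = ⟦invS a :: w⟧
    have h1 : (mu b x).1 = Quotient.mk (WS F) (invS a :: w) :=
      mu_fst₁ (hw'.symm.symm) x (out_spec x.1).symm
    have h2 : (mu a (mu b x)).1 = Quotient.mk (WS F) w :=
      mu_fst₁ (Eqv.refl _) (mu b x) h1
    have h3 : (mu a x).1 = Quotient.mk (WS F) (invS b :: w) := by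
      refine mu_fst₁ ?_ x (out_spec x.1).symm
      have : Eqv F (invS a :: invS b :: w) (invS b :: invS a :: w) :=
        Eqv.single (.swap [] w (invS a) (invS b) hcomm)
      exact this.trans hw'
    have h4 : (mu b (mu a x)).1 = Quotient.mk (WS F) w :=
      mu_fst₁ (Eqv.refl _) (mu a x) h3
    rw [h2, h4]
  · exact (key b a hab.symm x hb ha).symm
  · exact key a b hab x ha hb
  · -- neither extractable
    apply Subtype.ext
    have h1 : (mu b x).1 = Quotient.mk (WS F) (b :: x.1.out) :=
      mu_fst₂ hb x (out_spec x.1).symm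
    have hna : ¬ ∃ m, Eqv F (invS a :: m) (b :: x.1.out) := by
      rintro ⟨m, hm⟩
      have hne : invS a ≠ b := by
        intro h
        exact hab.1 (by rw [← h]; rfl)
      obtain ⟨m', hm'⟩ := ext_of_ext_cons hm hne
      exact ha ⟨m', hm'⟩
    have h2 : (mu a (mu b x)).1 = Quotient.mk (WS F) (a :: b :: x.1.out) :=
      mu_fst₂ hna (mu b x) h1
    have h1' : (mu a x).1 = Quotient.mk (WS F) (a :: x.1.out) :=
      mu_fst₂ ha x (out_spec x.1).symm
    have hnb : ¬ ∃ m, Eqv F (invS b :: m) (a :: x.1.out) := by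
      rintro ⟨m, hm⟩
      have hne : invS b ≠ a := by
        intro h
        exact hab.1 (by rw [← h]; rfl)
      obtain ⟨m', hm'⟩ := ext_of_ext_cons hm hne
      exact hb ⟨m', hm'⟩
    have h2' : (mu b (mu a x)).1 = Quotient.mk (WS F) (b :: a :: x.1.out) :=
      mu_fst₂ hnb (mu a x) h1'
    rw [h2, h2']
    exact Quotient.sound (Eqv.single (.swap [] x.1.out a b hab))

end Aux5
section Aux6

variable {k : ℕ} {F : Set (Sym2 (Fin k))}

/-- The action of a symbol as a permutation of reduced classes. -/
noncomputable def muE (a : Fin k × Bool) : Equiv.Perm (XR F) where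
  toFun := mu a
  invFun := mu (invS a)
  left_inv := fun x => mu_mu_inv a x
  right_inv := fun x => by
    have := mu_mu_inv (invS a) x
    rwa [invS_invS] at this

lemma muE_symm (a : Fin k × Bool) : (muE a : Equiv.Perm (XR F)).symm = muE (invS a) := by
  apply Equiv.ext; intro x
  simp [muE, Equiv.symm]

lemma rels_check :
    ∀ r ∈ Rels k F, FreeGroup.lift (fun i => (muE (i, true) : Equiv.Perm (XR F))) r = 1 := by
  rintro r ⟨i, j, hij, hF, rfl⟩
  have hcomm : CommS F (i, true) (j, true) := ⟨by simpa using hij, hF⟩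
  have hc : (muE (i, true) : Equiv.Perm (XR F)) * muE (j, true) =
      muE (j, true) * muE (i, true) := by
    apply Equiv.ext; intro x
    show mu (i, true) (mu (j, true) x) = mu (j, true) (mu (i, true) x)
    exact mu_comm hcomm x
  simp only [map_mul, map_inv, FreeGroup.lift_apply_of]
  rw [hc]
  group

/-- The homomorphism from the graph group to permutations of reduced classes. -/
noncomputable def phiH : Grp k F →* Equiv.Perm (XR F) :=
  PresentedGroup.toGroup rels_check

lemma phiH_gen (i : Fin k) : (phiH : Grp k F →* _) (gen k F i) = muE (i, true) :=
  PresentedGroup.toGroup.of rels_check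

lemma phiH_sym (α : Fin k × Bool) (x : XR F) : (phiH (sym k F α)) x = mu α x := by
  rcases α with ⟨i, b⟩
  cases b
  · show (phiH ((gen k F i)⁻¹)) x = _
    rw [map_inv, phiH_gen]
    show (muE (i, true) : Equiv.Perm (XR F)).symm x = _
    rw [muE_symm]
    rfl
  · show (phiH (gen k F i)) x = _
    rw [phiH_gen]; rfl

/-- The empty reduced class. -/
noncomputable def emptyX : XR F := ⟨Quotient.mk (WS F) [], [], RedW.nil, rfl⟩

/-- The normal form of a group element. -/
noncomputable def rho (x : Grp k F) : XR F := (phiH x) emptyX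

end Aux6
section Aux7

variable {k : ℕ} {F : Set (Sym2 (Fin k))}

lemma wordProd_nil : wordProd k F [] = 1 := rfl

lemma wordProd_cons (a : Fin k × Bool) (l : List (Fin k × Bool)) :
    wordProd k F (a :: l) = sym k F a * wordProd k F l := by
  simp [wordProd]

lemma wordProd_append (l₁ l₂ : List (Fin k × Bool)) :
    wordProd k F (l₁ ++ l₂) = wordProd k F l₁ * wordProd k F l₂ := by
  simp [wordProd]

lemma sym_invS (a : Fin k × Bool) : sym k F (invS a) = (sym k F a)⁻¹ := by
  rcases a with ⟨i, b⟩
  cases b <;> simp [sym, invS]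

/-- Commuting generators commute in the graph group. -/
lemma sym_comm {a b : Fin k × Bool} (h : CommS F a b) :
    sym k F a * sym k F b = sym k F b * sym k F a := by
  have hgen : Commute (gen k F a.1) (gen k F b.1) := by
    have : ((QuotientGroup.mk (FreeGroup.of a.1 * FreeGroup.of b.1 *
        (FreeGroup.of a.1)⁻¹ * (FreeGroup.of b.1)⁻¹) : Grp k F)) = 1 := by
      apply (QuotientGroup.eq_one_iff _).2
      exact Subgroup.subset_normalClosure ⟨a.1, b.1, h.1, h.2, rfl⟩
    have h2 : gen k F a.1 * gen k F b.1 * (gen k F a.1)⁻¹ * (gen k F b.1)⁻¹ = 1 := this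
    have h3 : (gen k F a.1 * gen k F b.1) * (gen k F b.1 * gen k F a.1)⁻¹ = 1 := by
      rw [mul_inv_rev, ← mul_assoc]; exact h2
    exact mul_inv_eq_one.mp h3
  have ha : Commute (sym k F a) (gen k F b.1) := by
    rcases a with ⟨i, ba⟩; cases ba
    · exact (hgen.inv_left : _)
    · exact hgen
  have : Commute (sym k F a) (sym k F b) := by
    rcases b with ⟨j, bb⟩; cases bb
    · exact (ha.inv_right : _)
    · exact ha
  exact this

/-- Trace-equivalent words have equal products. -/
lemma wordProd_eqv {l l' : List (Fin k × Bool)} (h : Eqv F l l') :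
    wordProd k F l = wordProd k F l' := by
  induction h with
  | refl => rfl
  | tail _ hstep ih =>
    rw [ih]
    cases hstep with | swap p q a b hab =>
    simp only [wordProd_append, wordProd_cons, ← mul_assoc]
    rw [mul_assoc (wordProd k F p) (sym k F a) (sym k F b), sym_comm hab, ← mul_assoc]

/-- Word product on the quotient. -/
noncomputable def WPQ (c : Quotient (WS F)) : Grp k F :=
  Quotient.lift (wordProd k F) (fun _ _ h => wordProd_eqv (by exact h)) c

lemma WPQ_mk (l : List (Fin k × Bool)) : WPQ (Quotient.mk (WS F) l) = wordProd k F l := rfl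

/-- Length on the quotient. -/
noncomputable def lenQ (c : Quotient (WS F)) : ℕ :=
  Quotient.lift List.length (fun _ _ h => Eqv.length_eq (by exact h)) c

lemma lenQ_mk (l : List (Fin k × Bool)) : lenQ (Quotient.mk (WS F) l) = l.length := rfl

lemma WPQ_out (c : Quotient (WS F)) : wordProd k F c.out = WPQ c := by
  rw [← WPQ_mk, out_spec]

lemma lenQ_out (c : Quotient (WS F)) : c.out.length = lenQ c := by
  rw [← lenQ_mk, out_spec]

/-- `mu` multiplies the word product by the symbol. -/
lemma WPQ_mu (a : Fin k × Bool) (x : XR F) :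
    WPQ (mu a x).1 = sym k F a * WPQ x.1 := by
  by_cases h : ∃ m, Eqv F (invS a :: m) x.1.out
  · obtain ⟨m, hm⟩ := h
    rw [mu_fst₁ hm x (out_spec x.1).symm, WPQ_mk, ← WPQ_out x.1, ← wordProd_eqv hm,
      wordProd_cons, sym_invS]
    group
  · rw [mu_fst₂ h x (out_spec x.1).symm, WPQ_mk, wordProd_cons, WPQ_out]

/-- `mu` changes length by exactly one. -/
lemma lenQ_mu (a : Fin k × Bool) (x : XR F) :
    lenQ (mu a x).1 = lenQ x.1 + 1 ∨ lenQ (mu a x).1 + 1 = lenQ x.1 := by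
  by_cases h : ∃ m, Eqv F (invS a :: m) x.1.out
  · obtain ⟨m, hm⟩ := h
    right
    rw [mu_fst₁ hm x (out_spec x.1).symm, lenQ_mk, ← lenQ_out x.1]
    simpa using hm.length_eq
  · left
    rw [mu_fst₂ h x (out_spec x.1).symm, lenQ_mk, ← lenQ_out x.1]
    simp

end Aux7
section Aux8

variable {k : ℕ} {F : Set (Sym2 (Fin k))}

lemma rho_mul_sym (α : Fin k × Bool) (x : Grp k F) :
    rho (sym k F α * x) = mu α (rho x) := by
  unfold rho
  rw [map_mul]
  exact phiH_sym α _

lemma rho_one : (rho (1 : Grp k F)) = emptyX := by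
  unfold rho; rw [map_one]; rfl

lemma rho_wordProd (l : List (Fin k × Bool)) :
    rho (wordProd k F l) = List.foldr mu (emptyX : XR F) l := by
  induction l with
  | nil => exact rho_one
  | cons a t ih => rw [wordProd_cons, rho_mul_sym, ih]; rfl

/-- Every group element is a word product. -/
lemma exists_word (x : Grp k F) : ∃ l, wordProd k F l = x := by
  obtain ⟨w, rfl⟩ := QuotientGroup.mk'_surjective
    (Subgroup.normalClosure (Rels k F)) x
  refine FreeGroup.induction_on w ⟨[], rfl⟩ (fun i => ⟨[(i, true)], ?_⟩)
    (fun i _ => ⟨[(i, false)], ?_⟩) ?_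
  · simp [wordProd, sym, gen]; rfl
  · simp [wordProd, sym, gen]; rfl
  · rintro y z ⟨ly, hy⟩ ⟨lz, hz⟩
    exact ⟨ly ++ lz, by rw [wordProd_append, hy, hz]; rfl⟩

/-- The word product of the normal form is the element itself. -/
lemma WPQ_rho (x : Grp k F) : WPQ (rho x).1 = x := by
  obtain ⟨l, rfl⟩ := exists_word x
  induction l with
  | nil => rw [show wordProd k F [] = 1 from rfl, rho_one]; rfl
  | cons a t ih =>
    rw [wordProd_cons, rho_mul_sym, WPQ_mu, ih]

lemma lenQ_rho_le (l : List (Fin k × Bool)) :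
    lenQ (rho (wordProd k F l)).1 ≤ l.length := by
  induction l with
  | nil => rw [show wordProd k F [] = 1 from rfl, rho_one]; exact le_refl 0
  | cons a t ih =>
    rw [wordProd_cons, rho_mul_sym]
    rcases lenQ_mu a (rho (wordProd k F t)) with h | h
    · rw [h]; simpa using ih
    · simp only [List.length_cons]; omega

lemma len_set_nonempty (x : Grp k F) :
    {n | ∃ l : List (Fin k × Bool), wordProd k F l = x ∧ l.length = n}.Nonempty := by
  obtain ⟨l, hl⟩ := exists_word x
  exact ⟨l.length, l, hl, rfl⟩

lemma exists_minWord (x : Grp k F) :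
    ∃ l, wordProd k F l = x ∧ l.length = len x := Nat.sInf_mem (len_set_nonempty x)

lemma len_le_word {x : Grp k F} {l : List (Fin k × Bool)} (h : wordProd k F l = x) :
    len x ≤ l.length := Nat.sInf_le ⟨l, h, rfl⟩

/-- `len` equals the length of the normal form. -/
lemma len_eq_lenQ_rho (x : Grp k F) : len x = lenQ (rho x).1 := by
  apply le_antisymm
  · refine len_le_word (l := (rho x).1.out) ?_ |>.trans ?_
    · rw [WPQ_out, WPQ_rho]
    · rw [lenQ_out]
  · obtain ⟨l, hl, hlen⟩ := exists_minWord x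
    rw [← hlen, ← hl]
    exact lenQ_rho_le l

/-- Words of minimal length map to their own class under `rho`. -/
lemma rho_geodesic : ∀ (l : List (Fin k × Bool)),
    lenQ (rho (wordProd k F l)).1 = l.length → (rho (wordProd k F l)).1 = Quotient.mk (WS F) l := by
  intro l
  induction l with
  | nil => intro _; rw [show wordProd k F [] = 1 from rfl, rho_one]; rfl
  | cons a t ih =>
    intro hlen
    have hle : lenQ (rho (wordProd k F t)).1 ≤ t.length := lenQ_rho_le t
    rw [wordProd_cons, rho_mul_sym] at hlen ⊢
    rcases lenQ_mu a (rho (wordProd k F t)) with h | h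
    · have ht : lenQ (rho (wordProd k F t)).1 = t.length := by
        simp only [List.length_cons] at hlen; omega
      have ht' := ih ht
      -- the branch must be the non-cancelling one
      by_cases hex : ∃ m, Eqv F (invS a :: m) t
      · exfalso
        obtain ⟨m, hm⟩ := hex
        have := mu_fst₁ hm (rho (wordProd k F t)) ht'
        rw [this, lenQ_mk] at hlen
        have := hm.length_eq
        simp only [List.length_cons] at hlen this
        omega
      · rw [mu_fst₂ hex (rho (wordProd k F t)) ht']
    · simp only [List.length_cons] at hlen; omega

/-- A geodesic word's class is the normal form. -/
lemma rho_of_minWord {x : Grp k F} {l : List (Fin k × Bool)}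
    (h : wordProd k F l = x) (hlen : l.length = len x) :
    (rho x).1 = Quotient.mk (WS F) l := by
  subst h
  exact rho_geodesic l (by rw [← len_eq_lenQ_rho, hlen])

lemma len_one : len (1 : Grp k F) = 0 :=
  Nat.le_zero.1 (len_le_word (l := []) rfl)

lemma eq_one_of_len_eq_zero {x : Grp k F} (h : len x = 0) : x = 1 := by
  obtain ⟨l, hl, hlen⟩ := exists_minWord x
  rw [h] at hlen
  rw [← hl, List.length_eq_zero_iff.1 hlen]
  rfl

lemma len_mul_le (x y : Grp k F) : len (x * y) ≤ len x + len y := by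
  obtain ⟨lx, hx, hxl⟩ := exists_minWord x
  obtain ⟨ly, hy, hyl⟩ := exists_minWord y
  have : wordProd k F (lx ++ ly) = x * y := by rw [wordProd_append, hx, hy]
  refine (len_le_word this).trans ?_
  simp [hxl, hyl]

lemma wordProd_invWord (l : List (Fin k × Bool)) :
    wordProd k F ((l.map invS).reverse) = (wordProd k F l)⁻¹ := by
  induction l with
  | nil => simp [wordProd]
  | cons a t ih =>
    rw [wordProd_cons]
    simp only [List.map_cons, List.reverse_cons]
    rw [wordProd_append, ih]
    simp [wordProd, sym_invS]

lemma len_inv (x : Grp k F) : len x⁻¹ = len x := by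
  have h : ∀ y : Grp k F, len y⁻¹ ≤ len y := by
    intro y
    obtain ⟨l, hl, hlen⟩ := exists_minWord y
    refine (len_le_word (l := (l.map invS).reverse) ?_).trans ?_
    · rw [wordProd_invWord, hl]
    · simp [hlen]
  exact le_antisymm (h x) (by simpa using h x⁻¹)

lemma len_sym (α : Fin k × Bool) : len (sym k F α) = 1 := by
  have h1 : sym k F α = wordProd k F [α] := by simp [wordProd]
  have : rho (sym k F α) = mu α emptyX := by rw [h1, rho_wordProd]; rfl
  rw [len_eq_lenQ_rho, this]
  rcases lenQ_mu α (emptyX : XR F) with h | h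
  · rw [h]; rfl
  · exfalso
    have : lenQ (emptyX : XR F).1 = 0 := rfl
    omega

/-- Multiplication by a symbol changes the length by exactly one. -/
lemma len_sym_mul (α : Fin k × Bool) (y : Grp k F) :
    len (sym k F α * y) = len y + 1 ∨ len (sym k F α * y) + 1 = len y := by
  rw [len_eq_lenQ_rho, len_eq_lenQ_rho, rho_mul_sym]
  exact lenQ_mu α (rho y)

end Aux8
section Aux9

variable {k : ℕ} {F : Set (Sym2 (Fin k))}

lemma le_refl' (x : Grp k F) : le x x := by
  unfold le
  simp [len_one]

lemma le_trans' {a b c : Grp k F} (h1 : le a b) (h2 : le b c) : le a c := by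
  unfold le at *
  have k1 : len (a⁻¹ * c) ≤ len (a⁻¹ * b) + len (b⁻¹ * c) := by
    have := len_mul_le (a⁻¹ * b) (b⁻¹ * c)
    simpa [mul_assoc] using this
  have k2 : len c ≤ len a + len (a⁻¹ * c) := by
    have := len_mul_le a (a⁻¹ * c)
    simpa using this
  omega

lemma maxSym_iff {α : Fin k × Bool} {x : Grp k F} :
    MaxSym α x ↔ len x = len (x * (sym k F α)⁻¹) + 1 := by
  unfold MaxSym le
  have h1 : (x * (sym k F α)⁻¹)⁻¹ * x = sym k F α := by group
  rw [h1, len_sym]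

lemma exists_maxSym {x : Grp k F} (hx : x ≠ 1) : ∃ α, MaxSym α x := by
  obtain ⟨l, hl, hlen⟩ := exists_minWord x
  rcases List.eq_nil_or_concat l with rfl | ⟨L, α, rfl⟩
  · exact absurd (hl.symm.trans rfl) hx
  · rw [List.concat_eq_append] at hl hlen
    refine ⟨α, maxSym_iff.2 ?_⟩
    have h1 : wordProd k F (L ++ [α]) = wordProd k F L * sym k F α := by
      rw [wordProd_append]; simp [wordProd]
    have h2 : wordProd k F L = x * (sym k F α)⁻¹ := by
      rw [← hl, h1]; group
    have h3 : len (x * (sym k F α)⁻¹) ≤ L.length := len_le_word h2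
    have h4 : len x ≤ len (x * (sym k F α)⁻¹) + 1 := by
      have h5 : (x * (sym k F α)⁻¹) * sym k F α = x := by group
      have := len_mul_le (x * (sym k F α)⁻¹) (sym k F α)
      rw [h5, len_sym] at this
      exact this
    have h6 : L.length + 1 = len x := by simpa using hlen
    omega

/-- The exchange lemma: two distinct maximal symbols can be simultaneously extracted. -/
lemma exchange {α β : Fin k × Bool} {x : Grp k F} (hα : MaxSym α x) (hβ : MaxSym β x)
    (hne : α ≠ β) : ∃ u, x = u * sym k F α * sym k F β ∧ len u + 2 ≤ len x := by
  have hα' := maxSym_iff.1 hα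
  have hβ' := maxSym_iff.1 hβ
  obtain ⟨m₁, hm₁, hm₁l⟩ := exists_minWord (x * (sym k F α)⁻¹)
  obtain ⟨m₂, hm₂, hm₂l⟩ := exists_minWord (x * (sym k F β)⁻¹)
  have hw₁ : wordProd k F (m₁ ++ [α]) = x := by
    rw [wordProd_append, hm₁]; simp [wordProd]
  have hw₂ : wordProd k F (m₂ ++ [β]) = x := by
    rw [wordProd_append, hm₂]; simp [wordProd]
  have hl₁ : (m₁ ++ [α]).length = len x := by simp [hm₁l]; omega
  have hl₂ : (m₂ ++ [β]).length = len x := by simp [hm₂l]; omega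
  have hc₁ := rho_of_minWord hw₁ hl₁
  have hc₂ := rho_of_minWord hw₂ hl₂
  have heqv : Eqv F (m₁ ++ [α]) (m₂ ++ [β]) := eqv_of_eq (hc₁.symm.trans hc₂)
  have hrev : Eqv F (α :: m₁.reverse) (β :: m₂.reverse) := by
    have := heqv.reverse
    simpa using this
  obtain ⟨p, q, heq, hp, _⟩ := hrev.extract
  rcases p with _ | ⟨β', p'⟩
  · exfalso
    injection heq with h1 _
    exact hne h1.symm
  · injection heq with h1 h2
    have hmv : Eqv F (p' ++ α :: q) (α :: (p' ++ q)) :=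
      Eqv.move_front (fun b hb => hp b (by simp [hb])) q
    have hgoal : Eqv F (β :: m₂.reverse) (β :: α :: (p' ++ q)) := by
      rw [h2]
      exact hmv.cons β
    have hfull : Eqv F (m₁ ++ [α]) ((p' ++ q).reverse ++ [α, β]) := by
      have h3 := (hrev.trans hgoal).reverse
      simpa using h3
    refine ⟨wordProd k F ((p' ++ q).reverse), ?_, ?_⟩
    · rw [← hw₁, wordProd_eqv hfull, wordProd_append]
      simp [wordProd, mul_assoc]
    · have h4 : len (wordProd k F ((p' ++ q).reverse)) ≤ p'.length + q.length :=
        (len_le_word rfl).trans (by simp; omega)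
      have h5 : m₂.length = p'.length + q.length + 1 := by
        have := congrArg List.length h2
        simp at this
        omega
      omega

end Aux9
section Aux10

variable {k : ℕ} {F : Set (Sym2 (Fin k))}

lemma main_aux : ∀ (n : ℕ) (x w : Grp k F), len x = n →
    (∀ p, IsPeak p → le p x → le p w) → le x w := by
  intro n
  induction n using Nat.strong_induction_on with
  | _ n ih =>
  intro x w hxn hpeaks
  by_cases hx1 : x = 1
  · subst hx1
    unfold le
    simp [len_one]
  · obtain ⟨α, hα⟩ := exists_maxSym hx1
    by_cases hpk : ∀ β, MaxSym β x → β = α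
    · exact hpeaks x ⟨α, hα, hpk⟩ (le_refl' x)
    · push_neg at hpk
      obtain ⟨β, hβ, hβne⟩ := hpk
      have hlen_a : len (x * (sym k F α)⁻¹) + 1 = len x := (maxSym_iff.1 hα).symm
      have hlen_b : len (x * (sym k F β)⁻¹) + 1 = len x := (maxSym_iff.1 hβ).symm
      have hIHa : le (x * (sym k F α)⁻¹) w := by
        refine ih (len (x * (sym k F α)⁻¹)) (by omega) _ w rfl ?_
        exact fun p hp hpa => hpeaks p hp (le_trans' hpa hα)
      have hIHb : le (x * (sym k F β)⁻¹) w := by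
        refine ih (len (x * (sym k F β)⁻¹)) (by omega) _ w rfl ?_
        exact fun p hp hpa => hpeaks p hp (le_trans' hpa hβ)
      -- rewrite the residuals
      have hra : (x * (sym k F α)⁻¹)⁻¹ * w = sym k F α * (x⁻¹ * w) := by group
      have hrb : (x * (sym k F β)⁻¹)⁻¹ * w = sym k F β * (x⁻¹ * w) := by group
      unfold le at hIHa hIHb ⊢
      rw [hra] at hIHa
      rw [hrb] at hIHb
      set y := x⁻¹ * w with hy
      rcases len_sym_mul α y with hca | hca
      · omega
      rcases len_sym_mul β y with hcb | hcb
      · omega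
      -- the impossible case : two cancellations
      exfalso
      have hya : MaxSym α y⁻¹ := by
        refine maxSym_iff.2 ?_
        have e1 : y⁻¹ * (sym k F α)⁻¹ = (sym k F α * y)⁻¹ := by group
        rw [e1, len_inv, len_inv]
        omega
      have hyb : MaxSym β y⁻¹ := by
        refine maxSym_iff.2 ?_
        have e1 : y⁻¹ * (sym k F β)⁻¹ = (sym k F β * y)⁻¹ := by group
        rw [e1, len_inv, len_inv]
        omega
      have hne : α ≠ β := fun h => hβne (h.symm)
      obtain ⟨u, hxu, hul⟩ := exchange hα hβ hne
      obtain ⟨v, hyv, hvl⟩ := exchange hya hyb hne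
      have hw : w = u * v⁻¹ := by
        have hyy : y = (v * sym k F α * sym k F β)⁻¹ := by rw [← hyv]; group
        have : w = x * y := by rw [hy]; group
        rw [this, hxu, hyy]
        group
      have hwle : len w ≤ len u + len v := by
        have := len_mul_le u v⁻¹
        rw [← hw, len_inv] at this
        exact this
      have hly : len y⁻¹ = len y := len_inv y
      omega

end Aux10

/-- every `x` is the join of all peaks `p ≤ x`. -/
theorem stmt12 {k : ℕ} (hk : 1 ≤ k) {F : Set (Sym2 (Fin k))} (x : Grp k F) :
    IsJoinSet {p : Grp k F | IsPeak p ∧ le p x} x := by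
  constructor
  · rintro p ⟨_, hle⟩
    exact hle
  · intro w hw
    exact main_aux (len x) x w rfl (fun p hp hpx => hw p ⟨hp, hpx⟩)
end GraphGroupPaper
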